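/- Let f : Q^3 → Q be any local rule and let k, n ≥ 1 be integers. If the cyclic-boundary transition function f_{(kn),*} : Q^{kn} → Q^{kn} is bijective, then the cyclic-boundary transition function f_{(n),*} : Q^n → Q^n is bijective. -/
import Mathlib


/-- The state set `Q = {0,1}` as `ZMod 2`. -/
abbrev Q : Type := ZMod 2

/-- A triplet local rule `f : Q³ → Q`. -/
abbrev Rule : Type := Q → Q → Q → Q

/-- A configuration of length `n`. -/
abbrev Config (n : ℕ) : Type := Fin n → Q

/-- The transition sending `x` to the word whose `i`-th letter is
`f (x (i-1)) (x i) (x (i+1))`, where the virtual boundary letters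
`x₀` and `x_{n+1}` are given as `x0` and `xn1`. -/
def caTrans {n : ℕ} (f : Rule) (x0 xn1 : Q) (x : Config n) : Config n :=
  fun i =>
    f (if _h : i.1 = 0 then x0
       else x ⟨i.1 - 1, Nat.lt_of_le_of_lt (Nat.sub_le _ _) i.isLt⟩)
      (x i)
      (if h : i.1 + 1 < n then x ⟨i.1 + 1, h⟩ else xn1)

/-- The first letter `x₁` of a nonempty configuration. -/
def firstCell {n : ℕ} (hn : 0 < n) (x : Config n) : Q := x ⟨0, hn⟩

/-- The last letter `xₙ` of a nonempty configuration. -/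
def lastCell {n : ℕ} (hn : 0 < n) (x : Config n) : Q :=
  x ⟨n - 1, Nat.sub_lt hn Nat.one_pos⟩

/-- Fixed boundary `a-b` : `x₀ = a`, `x_{n+1} = b`. -/
def fixedBC {n : ℕ} (f : Rule) (a b : Q) : Config n → Config n :=
  fun x => caTrans f a b x

/-- Boundary `a-*` : `x₀ = a`, `x_{n+1} = xₙ`. -/
def leftFixedBC {n : ℕ} (hn : 0 < n) (f : Rule) (a : Q) : Config n → Config n :=
  fun x => caTrans f a (lastCell hn x) x

/-- Boundary `*-b` : `x₀ = x₁`, `x_{n+1} = b`. -/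
def rightFixedBC {n : ℕ} (hn : 0 < n) (f : Rule) (b : Q) : Config n → Config n :=
  fun x => caTrans f (firstCell hn x) b x

/-- Free boundary `*-*` : `x₀ = x₁`, `x_{n+1} = xₙ`. -/
def freeBC {n : ℕ} (hn : 0 < n) (f : Rule) : Config n → Config n :=
  fun x => caTrans f (firstCell hn x) (lastCell hn x) x

/-- Cyclic boundary `*` : `x₀ = xₙ`, `x_{n+1} = x₁`. -/
def cyclicBC {n : ℕ} (hn : 0 < n) (f : Rule) : Config n → Config n :=
  fun x => caTrans f (lastCell hn x) (firstCell hn x) x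

/-- Repeat a configuration of length `n` to one of length `k * n`. -/
def repCfg {k n : ℕ} (hn : 0 < n) (x : Config n) : Config (k * n) :=
  fun i => x ⟨i.1 % n, Nat.mod_lt _ hn⟩

lemma mod_pred_of_mod_eq_zero {a n : ℕ} (hn : 0 < n) (ha : a ≠ 0) (h : a % n = 0) :
    (a - 1) % n = n - 1 := by
  obtain ⟨q, rfl⟩ := Nat.dvd_of_mod_eq_zero h
  have hq : 1 ≤ q := by
    rcases Nat.eq_zero_or_pos q with h0 | h0
    · simp [h0] at ha
    · exact h0
  have : n * q - 1 = (q - 1) * n + (n - 1) := by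
    cases q with
    | zero => omega
    | succ m => rw [Nat.mul_succ, Nat.succ_sub_one, Nat.mul_comm n m]; omega
  rw [this, Nat.add_comm, Nat.add_mul_mod_self_right]
  exact Nat.mod_eq_of_lt (by omega)

lemma mod_pred_of_mod_ne_zero {a n : ℕ} (hn : 0 < n) (h : a % n ≠ 0) :
    (a - 1) % n = a % n - 1 := by
  have hd := Nat.div_add_mod a n
  have hlt : a % n < n := Nat.mod_lt _ hn
  have : a - 1 = n * (a / n) + (a % n - 1) := by omega
  rw [this, Nat.mul_comm, Nat.add_comm, Nat.add_mul_mod_self_right]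
  exact Nat.mod_eq_of_lt (by omega)

lemma mod_succ_lt {a n : ℕ} (h : a % n + 1 < n) : (a + 1) % n = a % n + 1 := by
  conv_lhs => rw [← Nat.div_add_mod a n, Nat.add_assoc, Nat.mul_comm, Nat.add_comm,
    Nat.add_mul_mod_self_right]
  exact Nat.mod_eq_of_lt h

lemma mod_succ_eq_zero {a n : ℕ} (hn : 0 < n) (h : ¬ a % n + 1 < n) : (a + 1) % n = 0 := by
  have hlt : a % n < n := Nat.mod_lt _ hn
  have he : a % n + 1 = n := by omega
  conv_lhs => rw [← Nat.div_add_mod a n, Nat.add_assoc, Nat.mul_comm, Nat.add_comm,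
    Nat.add_mul_mod_self_right, he]
  simp

lemma repCfg_comm {k n : ℕ} (f : Rule) (hk : 0 < k) (hn : 0 < n) (x : Config n) :
    cyclicBC (Nat.mul_pos hk hn) f (repCfg hn x) = repCfg hn (cyclicBC hn f x) := by
  have hkn : 0 < k * n := Nat.mul_pos hk hn
  funext i
  have him : i.1 % n < n := Nat.mod_lt _ hn
  simp only [cyclicBC, caTrans, repCfg, lastCell, firstCell]
  have hL : (if _h : i.1 = 0 then x ⟨(k * n - 1) % n, Nat.mod_lt _ hn⟩
      else x ⟨(i.1 - 1) % n, Nat.mod_lt _ hn⟩) =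
      (if _h : i.1 % n = 0 then x ⟨n - 1, Nat.sub_lt hn Nat.one_pos⟩
      else x ⟨i.1 % n - 1, Nat.lt_of_le_of_lt (Nat.sub_le _ _) him⟩) := by
    by_cases h0 : i.1 = 0
    · have : i.1 % n = 0 := by simp [h0]
      rw [dif_pos h0, dif_pos this]
      congr 1
      exact Fin.ext (mod_pred_of_mod_eq_zero hn hkn.ne' (by simp))
    · rw [dif_neg h0]
      by_cases hm : i.1 % n = 0
      · rw [dif_pos hm]
        exact congrArg x (Fin.ext (mod_pred_of_mod_eq_zero hn h0 hm))
      · rw [dif_neg hm]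
        exact congrArg x (Fin.ext (mod_pred_of_mod_ne_zero hn hm))
  have hR : (if h : i.1 + 1 < k * n then x ⟨(i.1 + 1) % n, Nat.mod_lt _ hn⟩
      else x ⟨0 % n, Nat.mod_lt _ hn⟩) =
      (if h : i.1 % n + 1 < n then x ⟨i.1 % n + 1, h⟩ else x ⟨0, hn⟩) := by
    by_cases hbig : i.1 + 1 < k * n
    · rw [dif_pos hbig]
      by_cases hs : i.1 % n + 1 < n
      · rw [dif_pos hs]
        exact congrArg x (Fin.ext (mod_succ_lt hs))
      · rw [dif_neg hs]
        exact congrArg x (Fin.ext (mod_succ_eq_zero hn hs))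
    · rw [dif_neg hbig]
      have hi1 : i.1 = k * n - 1 := by have := i.isLt; omega
      have hmod : i.1 % n = n - 1 := by
        rw [hi1]; exact mod_pred_of_mod_eq_zero hn (by omega) (Nat.mul_mod_left k n)
      have hs : ¬ i.1 % n + 1 < n := by omega
      rw [dif_neg hs]
      exact congrArg x (Fin.ext (Nat.zero_mod n))
  rw [hL, hR]

lemma repCfg_injective {k n : ℕ} (hk : 0 < k) (hn : 0 < n) :
    Function.Injective (repCfg (k := k) hn) := by
  intro a b hab
  funext i
  have hlt : i.1 < k * n := lt_of_lt_of_le i.isLt (Nat.le_mul_of_pos_left n hk)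
  have := congrFun hab ⟨i.1, hlt⟩
  simpa [repCfg, Nat.mod_eq_of_lt i.isLt] using this

theorem statement3 (f : Rule) (k n : ℕ) (hk : 1 ≤ k) (hn : 1 ≤ n)
    (h : Function.Bijective (cyclicBC (Nat.mul_pos hk hn) f)) :
    Function.Bijective (cyclicBC hn f) := by
  rw [Fintype.bijective_iff_injective_and_card]
  refine ⟨?_, rfl⟩
  intro a b hab
  apply repCfg_injective hk hn
  apply h.1
  rw [repCfg_comm f hk hn a, repCfg_comm f hk hn b, hab]
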